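/- Let R : ℝ → ℝ be differentiable with R(t) > 0 for all t ∈ ℝ, satisfying R(t) = R(t − 2·R(t)) for all t ∈ ℝ. Then R'(t) ≥ 0 for every t ∈ ℝ. -/

import Mathlib

/-- Intermediate step in the proof of Proposition 3 of the paper: a positive
differentiable solution of `R(t) = R(t - 2 R(t))` can have no point of
negative derivative. -/
theorem deriv_nonneg_of_functional_equation
    (R : ℝ → ℝ) (hR : Differentiable ℝ R)
    (hRpos : ∀ t : ℝ, R t > 0)
    (hfe : ∀ t : ℝ, R t = R (t - 2 * R t)) :
    ∀ t : ℝ, deriv R t ≥ 0 := by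
  -- iterated functional equation
  have hit : ∀ (n : ℕ) (u : ℝ), R (u - 2 * n * R u) = R u := by
    intro n
    induction n with
    | zero => intro u; norm_num
    | succ n ih =>
      intro u
      have h1 := ih u
      have h2 := hfe (u - 2 * n * R u)
      rw [h1] at h2
      have heq : u - 2 * ((n:ℕ) + 1 : ℕ) * R u = u - 2 * n * R u - 2 * R u := by
        push_cast; ring
      rw [heq, ← h2]
  intro t₀
  by_contra hneg
  push_neg at hneg
  -- derivative of inner map
  have hin : ∀ t : ℝ, HasDerivAt (fun s => s - 2 * R s) (1 - 2 * deriv R t) t := by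
    intro t
    exact (hasDerivAt_id t).sub (((hR t).hasDerivAt).const_mul 2)
  -- chain rule identity
  have key : ∀ t : ℝ, deriv R t = deriv R (t - 2 * R t) * (1 - 2 * deriv R t) := by
    intro t
    have hcomp : HasDerivAt (fun s => R (s - 2 * R s))
        (deriv R (t - 2 * R t) * (1 - 2 * deriv R t)) t :=
      ((hR (t - 2 * R t)).hasDerivAt).comp t (hin t)
    have heq : (fun s => R (s - 2 * R s)) = R := funext fun s => (hfe s).symm
    rw [heq] at hcomp
    exact hcomp.deriv
  -- deriv R never equals 1/2
  have hne : ∀ t : ℝ, deriv R t ≠ 1 / 2 := by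
    intro t h
    have := key t
    rw [h] at this
    norm_num at this
  -- Darboux: deriv R < 1/2 everywhere
  have hlt : ∀ t : ℝ, deriv R t < 1 / 2 := by
    have hd := hasDerivWithinAt_forall_lt_or_forall_gt_of_forall_ne
      (convex_univ : Convex ℝ (Set.univ : Set ℝ))
      (f := R) (f' := fun x => deriv R x)
      (fun x _ => ((hR x).hasDerivAt).hasDerivWithinAt) (m := 1 / 2)
      (fun x _ => hne x)
    rcases hd with h | h
    · exact fun t => h t trivial
    · exact absurd (h t₀ trivial) (by linarith)
  -- g is strictly monotone
  have hg : StrictMono (fun s : ℝ => s - 2 * R s) := by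
    apply strictMono_of_deriv_pos
    intro x
    rw [(hin x).deriv]
    have := hlt x
    linarith
  -- no increasing pair
  have hanti : ∀ s t : ℝ, s ≤ t → R t ≤ R s := by
    by_contra hmono
    push_neg at hmono
    obtain ⟨s, t, hst, hRst⟩ := hmono
    -- iterated monotonicity
    have hiter : ∀ n : ℕ, s - 2 * n * R s ≤ t - 2 * n * R t := by
      intro n
      induction n with
      | zero => norm_num; exact hst
      | succ n ih =>
        have h1 := hg.monotone ih
        rw [hit n s, hit n t] at h1
        calc s - 2 * (n + 1 : ℕ) * R s
            = s - 2 * n * R s - 2 * R s := by push_cast; ring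
          _ ≤ t - 2 * n * R t - 2 * R t := h1
          _ = t - 2 * (n + 1 : ℕ) * R t := by push_cast; ring
    obtain ⟨n, hn⟩ := exists_nat_gt ((t - s) / (2 * (R t - R s)))
    have hpos : (0:ℝ) < 2 * (R t - R s) := by linarith
    have h2 : t - s < 2 * (R t - R s) * n := by
      rw [div_lt_iff₀ hpos] at hn
      linarith [hn]
    have h3 := hiter n
    nlinarith
  -- antitone case: R is constant
  have hconst : ∀ x y : ℝ, x ≤ y → R x = R y := by
    intro x y hxy
    obtain ⟨k, hk⟩ := exists_nat_gt ((y - x) / (2 * R y))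
    have hpos : (0:ℝ) < 2 * R y := by linarith [hRpos y]
    have h1 : y - x < 2 * R y * k := by
      rw [div_lt_iff₀ hpos] at hk
      linarith [hk]
    have h2 : y - 2 * k * R y ≤ x := by nlinarith
    have h3 := hanti (y - 2 * k * R y) x h2
    rw [hit k y] at h3
    have h4 := hanti x y hxy
    linarith
  have hRconst : R = fun _ => R 0 := by
    funext x
    rcases le_total x 0 with h | h
    · exact hconst x 0 h
    · exact (hconst 0 x h).symm
  rw [hRconst] at hneg
  simp [deriv_const] at hneg
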